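/- arXiv:2110.13584 — 4 statements merged into one kernel-verified Lean document; each statement's English description precedes it below -/
import Mathlib

section
/- For every η > 0 and every real t with t > π/η, the Fourier transform satisfies |F_η(t)| ≤ (1/(2π)) · π² / (t³ η² − t π²). -/
open Real MeasureTheory

/-- The indicator function `f_η`. -/
noncomputable def indFun (η w : ℝ) : ℝ :=
  if -η < w ∧ w < η then Real.cos (Real.pi * w / (2 * η)) ^ 2 else 0

/-- The Fourier transform `F_η(t) = (1/(2π)) ∫ f_η(w) e^{-i t w} dw`. -/
noncomputable def indFT (η t : ℝ) : ℂ :=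
  (1 / (2 * Real.pi) : ℂ) * ∫ w : ℝ, (indFun η w : ℂ) * Complex.exp (-Complex.I * t * w)

set_option maxHeartbeats 1000000 in
theorem stmt_2 (η t : ℝ) (hη : 0 < η) (ht : Real.pi / η < t) :
    ‖indFT η t‖ ≤ (1 / (2 * Real.pi)) * (Real.pi ^ 2 / (t ^ 3 * η ^ 2 - t * Real.pi ^ 2)) := by
  have hπ := Real.pi_pos
  set a : ℝ := Real.pi / η with ha_def
  clear_value a
  have ha : 0 < a := by rw [ha_def]; exact div_pos hπ hη
  have ht0 : 0 < t := ha.trans ht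
  have haη : a * η = Real.pi := by rw [ha_def]; exact div_mul_cancel₀ _ hη.ne'
  have hta : (0:ℝ) < t - a := by linarith
  have htpa : (0:ℝ) < t + a := by linarith
  -- the smooth profile
  set f : ℝ → ℝ := fun w => Real.cos (a * w / 2) ^ 2 with hf_def
  have hf_eq : ∀ w, indFun η w = Set.indicator (Set.Ioo (-η) η) f w := by
    intro w
    have h0 : Real.pi * w / (2 * η) = a * w / 2 := by
      rw [ha_def, div_mul_eq_mul_div, div_div, mul_comm η 2]
    simp only [indFun, Set.indicator, Set.mem_Ioo, hf_def, h0]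
  -- step 1: reduce to interval integral
  have hstep1 : (∫ w : ℝ, (indFun η w : ℂ) * Complex.exp (-Complex.I * t * w))
      = ∫ w in (-η)..η, (f w : ℂ) * Complex.exp (-Complex.I * t * w) := by
    have : (fun w : ℝ => (indFun η w : ℂ) * Complex.exp (-Complex.I * t * w))
        = Set.indicator (Set.Ioo (-η) η)
            (fun w => (f w : ℂ) * Complex.exp (-Complex.I * t * w)) := by
      funext w
      rw [hf_eq w]
      by_cases hw : w ∈ Set.Ioo (-η) η <;>
        simp [Set.indicator_of_mem, Set.indicator_of_notMem, hw]
    rw [this, MeasureTheory.integral_indicator measurableSet_Ioo,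
      ← MeasureTheory.integral_Ioc_eq_integral_Ioo,
      ← intervalIntegral.integral_of_le (by linarith : -η ≤ η)]
  -- step 2: split exp into cos and sin
  have hexp : ∀ w : ℝ, Complex.exp (-Complex.I * t * w)
      = ((Real.cos (t * w) : ℝ) : ℂ) - Complex.I * ((Real.sin (t * w) : ℝ) : ℂ) := by
    intro w
    have h1 : (-Complex.I * t * w) = ((-(t * w) : ℝ) : ℂ) * Complex.I := by
      push_cast; ring
    rw [h1, Complex.exp_mul_I, ← Complex.ofReal_cos, ← Complex.ofReal_sin]
    push_cast [Real.cos_neg, Real.sin_neg]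
    ring
  have hcontf : Continuous f := by
    apply Continuous.pow
    exact Real.continuous_cos.comp (by continuity)
  have hcont1 : Continuous fun w => f w * Real.cos (t * w) :=
    hcontf.mul (Real.continuous_cos.comp (by continuity))
  have hcont2 : Continuous fun w => f w * Real.sin (t * w) :=
    hcontf.mul (Real.continuous_sin.comp (by continuity))
  have hint1 : IntervalIntegrable (fun w => f w * Real.cos (t * w)) volume (-η) η :=
    hcont1.intervalIntegrable _ _
  have hint2 : IntervalIntegrable (fun w => f w * Real.sin (t * w)) volume (-η) η :=
    hcont2.intervalIntegrable _ _
  have hstep2 : (∫ w in (-η)..η, (f w : ℂ) * Complex.exp (-Complex.I * t * w))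
      = ((∫ w in (-η)..η, f w * Real.cos (t * w) : ℝ) : ℂ)
        - Complex.I * ((∫ w in (-η)..η, f w * Real.sin (t * w) : ℝ) : ℂ) := by
    have hpt : ∀ w : ℝ, (f w : ℂ) * Complex.exp (-Complex.I * t * w)
        = ((f w * Real.cos (t * w) : ℝ) : ℂ)
          - Complex.I * ((f w * Real.sin (t * w) : ℝ) : ℂ) := by
      intro w; rw [hexp w]; push_cast; ring
    rw [intervalIntegral.integral_congr (fun w _ => hpt w)]
    rw [intervalIntegral.integral_sub, intervalIntegral.integral_const_mul,
      intervalIntegral.integral_ofReal, intervalIntegral.integral_ofReal]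
    · exact ((Complex.continuous_ofReal.comp hcont1).intervalIntegrable _ _)
    · exact ((Complex.continuous_ofReal.comp hcont2).intervalIntegrable _ _).const_mul _
  -- step 3: sin part is zero (odd integrand)
  have hsin : (∫ w in (-η)..η, f w * Real.sin (t * w)) = 0 := by
    set g : ℝ → ℝ := fun w => f w * Real.sin (t * w) with hg_def
    have hodd : ∀ x, g (-x) = -g x := by
      intro x
      show Real.cos (a * (-x) / 2) ^ 2 * Real.sin (t * (-x))
        = -(Real.cos (a * x / 2) ^ 2 * Real.sin (t * x))
      rw [show a * (-x) / 2 = -(a * x / 2) by ring, show t * (-x) = -(t * x) by ring,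
        Real.cos_neg, Real.sin_neg]
      ring
    have h1 : (∫ x in (-η)..η, g (-x)) = ∫ x in (-η)..η, g x := by
      rw [intervalIntegral.integral_comp_neg g]
      norm_num
    have h2 : (∫ x in (-η)..η, g (-x)) = -∫ x in (-η)..η, g x := by
      simp only [hodd]
      rw [intervalIntegral.integral_neg]
    have := h1.symm.trans h2
    linarith
  -- step 4: cos part via FTC
  set G : ℝ → ℝ := fun w => Real.sin (t * w) / (2 * t)
      + Real.sin ((t - a) * w) / (4 * (t - a)) + Real.sin ((t + a) * w) / (4 * (t + a))
    with hG_def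
  have hG : ∀ w, HasDerivAt G (f w * Real.cos (t * w)) w := by
    intro w
    have l1 : HasDerivAt (fun w : ℝ => t * w) t w := by
      simpa using (hasDerivAt_id w).const_mul t
    have l2 : HasDerivAt (fun w : ℝ => (t - a) * w) (t - a) w := by
      simpa using (hasDerivAt_id w).const_mul (t - a)
    have l3 : HasDerivAt (fun w : ℝ => (t + a) * w) (t + a) w := by
      simpa using (hasDerivAt_id w).const_mul (t + a)
    have d1 := ((Real.hasDerivAt_sin (t * w)).comp w l1).div_const (2 * t)
    have d2 := ((Real.hasDerivAt_sin ((t - a) * w)).comp w l2).div_const (4 * (t - a))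
    have d3 := ((Real.hasDerivAt_sin ((t + a) * w)).comp w l3).div_const (4 * (t + a))
    have hD := (d1.add d2).add d3
    refine hD.congr_deriv ?_
    have e2 : Real.cos ((t - a) * w) = Real.cos (t * w) * Real.cos (a * w)
        + Real.sin (t * w) * Real.sin (a * w) := by
      rw [sub_mul, Real.cos_sub]
    have e3 : Real.cos ((t + a) * w) = Real.cos (t * w) * Real.cos (a * w)
        - Real.sin (t * w) * Real.sin (a * w) := by
      rw [add_mul, Real.cos_add]
    have e1 : f w = 1 / 2 + Real.cos (a * w) / 2 := by
      show Real.cos (a * w / 2) ^ 2 = _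
      rw [Real.cos_sq, show 2 * (a * w / 2) = a * w by ring]
    rw [e1, e2, e3]
    field_simp
    ring
  have hcos : (∫ w in (-η)..η, f w * Real.cos (t * w)) = G η - G (-η) :=
    intervalIntegral.integral_eq_sub_of_hasDerivAt (fun w _ => hG w) hint1
  -- evaluate G
  have hGval : G η - G (-η)
      = -Real.sin (t * η) * a ^ 2 / (t * (t ^ 2 - a ^ 2)) := by
    have k1 : Real.sin ((t - a) * η) = -Real.sin (t * η) := by
      rw [sub_mul, haη, show t * η - Real.pi = -(Real.pi - t * η) by ring, Real.sin_neg,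
        Real.sin_pi_sub]
    have k2 : Real.sin ((t + a) * η) = -Real.sin (t * η) := by
      rw [add_mul, haη, Real.sin_add_pi]
    have k3 : Real.sin (t * (-η)) = -Real.sin (t * η) := by
      rw [show t * (-η) = -(t * η) by ring, Real.sin_neg]
    have k4 : Real.sin ((t - a) * (-η)) = Real.sin (t * η) := by
      rw [show (t - a) * (-η) = -((t - a) * η) by ring, Real.sin_neg, k1, neg_neg]
    have k5 : Real.sin ((t + a) * (-η)) = Real.sin (t * η) := by
      rw [show (t + a) * (-η) = -((t + a) * η) by ring, Real.sin_neg, k2, neg_neg]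
    show Real.sin (t * η) / (2 * t) + Real.sin ((t - a) * η) / (4 * (t - a))
        + Real.sin ((t + a) * η) / (4 * (t + a))
        - (Real.sin (t * (-η)) / (2 * t) + Real.sin ((t - a) * (-η)) / (4 * (t - a))
          + Real.sin ((t + a) * (-η)) / (4 * (t + a))) = _
    rw [k1, k2, k3, k4, k5]
    have h1 : t - a ≠ 0 := hta.ne'
    have h2 : t + a ≠ 0 := htpa.ne'
    have h3 : t ≠ 0 := ht0.ne'
    have h4 : t ^ 2 - a ^ 2 ≠ 0 := by nlinarith
    field_simp
    ring
  -- put together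
  have hval : indFT η t = (1 / (2 * Real.pi) : ℂ)
      * ((-Real.sin (t * η) * a ^ 2 / (t * (t ^ 2 - a ^ 2)) : ℝ) : ℂ) := by
    rw [indFT, hstep1, hstep2, hsin, hcos, hGval]
    push_cast
    ring
  have hnorm : ‖indFT η t‖
      = (1 / (2 * Real.pi)) * |(-Real.sin (t * η) * a ^ 2 / (t * (t ^ 2 - a ^ 2)))| := by
    rw [hval, norm_mul, Complex.norm_real, Real.norm_eq_abs]
    congr 1
    rw [show (1 / (2 * Real.pi) : ℂ) = ((1 / (2 * Real.pi) : ℝ) : ℂ) by push_cast; ring,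
      Complex.norm_real, Real.norm_eq_abs, abs_of_pos (by positivity)]
  rw [hnorm]
  have hden : 0 < t * (t ^ 2 - a ^ 2) := by
    apply mul_pos ht0
    nlinarith
  have hrw : Real.pi ^ 2 / (t ^ 3 * η ^ 2 - t * Real.pi ^ 2) = a ^ 2 / (t * (t ^ 2 - a ^ 2)) := by
    rw [← haη]
    have hne : t ^ 3 * η ^ 2 - t * (a * η) ^ 2 ≠ 0 := by
      have : t ^ 3 * η ^ 2 - t * (a * η) ^ 2 = η ^ 2 * (t * (t ^ 2 - a ^ 2)) := by ring
      rw [this]; positivity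
    field_simp
  rw [hrw]
  apply mul_le_mul_of_nonneg_left _ (by positivity)
  rw [abs_div, abs_of_pos hden]
  gcongr
  rw [abs_mul, abs_neg, abs_of_nonneg (by positivity : (0:ℝ) ≤ a ^ 2)]
  calc |Real.sin (t * η)| * a ^ 2 ≤ 1 * a ^ 2 :=
        mul_le_mul_of_nonneg_right (Real.abs_sin_le_one _) (by positivity)
    _ = a ^ 2 := one_mul _
end

section
/- For every real η > 0 and every natural number T with η T > π, the series ∑_{t = T+1}^∞ π² / (η² t³ − π² t) (sum over integers t > T) converges and is bounded above by (1/2) · log( η² T² / (η² T² − π²) ). -/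
open Real

private lemma stmt4_key (a b t : ℝ) (ha : 0 < a) (hb : 0 < b) (h : a < b * (t - 1)) :
    a^2/(b^2*t^3 - a^2*t) ≤
      (1/2) * Real.log (b^2*(t-1)^2/(b^2*(t-1)^2 - a^2)) -
      (1/2) * Real.log (b^2*t^2/(b^2*t^2 - a^2)) := by
  have ht1 : 0 < t - 1 := by nlinarith
  have ht : 1 < t := by linarith
  have hA : 0 < b^2*(t-1)^2 - a^2 := by nlinarith
  have hbt : a < b * t := by nlinarith
  have hB : 0 < b^2*t^2 - a^2 := by nlinarith
  set X := b^2*(t-1)^2/(b^2*(t-1)^2 - a^2) with hXdef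
  set Y := b^2*t^2/(b^2*t^2 - a^2) with hYdef
  have hX : 0 < X := div_pos (by positivity) hA
  have hY : 0 < Y := div_pos (by positivity) hB
  have hlog : Real.log (Y / X) ≤ Y / X - 1 :=
    Real.log_le_sub_one_of_pos (div_pos hY hX)
  have h2 : Real.log X - Real.log Y = - Real.log (Y/X) := by
    rw [Real.log_div hY.ne' hX.ne']; ring
  have hD : (0:ℝ) < (t-1)^2*(b^2*t^2-a^2) := mul_pos (by positivity) hB
  have hYX0 : Y / X = (t^2*(b^2*(t-1)^2-a^2))/((t-1)^2*(b^2*t^2-a^2)) := by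
    rw [div_eq_div_iff hX.ne' hD.ne', hXdef, hYdef]
    field_simp
  have hYX : 1 - Y / X = (a^2*(2*t-1))/((t-1)^2*(b^2*t^2-a^2)) := by
    rw [hYX0, one_sub_div hD.ne']
    congr 1
    ring
  have hden : 0 < b^2*t^3 - a^2*t := by nlinarith
  have h3 : (0:ℝ) ≤ 3*t - 2 := by linarith
  have main : a^2/(b^2*t^3 - a^2*t) ≤ (1/2) * (1 - Y/X) := by
    rw [hYX]
    have e1 : (1:ℝ)/2 * ((a^2*(2*t-1))/((t-1)^2*(b^2*t^2-a^2)))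
        = (1*(a^2*(2*t-1)))/(2*((t-1)^2*(b^2*t^2-a^2))) := div_mul_div_comm 1 2 (a^2*(2*t-1)) ((t-1)^2*(b^2*t^2-a^2))
    rw [one_mul] at e1
    rw [e1, div_le_div_iff₀ hden (by positivity)]
    nlinarith [mul_nonneg (mul_nonneg (sq_nonneg a) hB.le) h3]
  have : 1 - Y/X ≤ Real.log X - Real.log Y := by
    rw [h2]; linarith
  linarith

private def stmt4_equiv (T : ℕ) : ℕ ≃ {t : ℕ // T < t} where
  toFun n := ⟨T + 1 + n, by omega⟩
  invFun t := t.1 - (T + 1)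
  left_inv n := by
    show T + 1 + n - (T + 1) = n
    omega
  right_inv t := by
    apply Subtype.ext
    have := t.2
    show T + 1 + (t.1 - (T + 1)) = t.1
    omega

theorem stmt_4 (η : ℝ) (T : ℕ) (hη : 0 < η) (hηT : Real.pi < η * T) :
    Summable (fun t : {t : ℕ // T < t} =>
      Real.pi ^ 2 / (η ^ 2 * (t : ℝ) ^ 3 - Real.pi ^ 2 * (t : ℝ))) ∧
    ∑' t : {t : ℕ // T < t},
        Real.pi ^ 2 / (η ^ 2 * (t : ℝ) ^ 3 - Real.pi ^ 2 * (t : ℝ)) ≤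
      (1 / 2) * Real.log (η ^ 2 * (T : ℝ) ^ 2 / (η ^ 2 * (T : ℝ) ^ 2 - Real.pi ^ 2)) := by
  have hπ : (0:ℝ) < Real.pi := Real.pi_pos
  set f : {t : ℕ // T < t} → ℝ :=
    fun t => Real.pi ^ 2 / (η ^ 2 * (t : ℝ) ^ 3 - Real.pi ^ 2 * (t : ℝ)) with hf
  set e := stmt4_equiv T with he
  set G : ℕ → ℝ := fun n =>
    (1/2) * Real.log (η^2*(n:ℝ)^2/(η^2*(n:ℝ)^2 - Real.pi^2)) with hG
  -- basic positivity facts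
  have hmono : ∀ n : ℕ, T ≤ n → Real.pi < η * n := by
    intro n hn
    exact lt_of_lt_of_le hηT (by
      apply mul_le_mul_of_nonneg_left _ hη.le
      exact_mod_cast hn)
  have hdenpos : ∀ n : ℕ, T ≤ n → 0 < η^2*(n:ℝ)^2 - Real.pi^2 := by
    intro n hn
    have := hmono n hn
    nlinarith
  have hGnonneg : ∀ n : ℕ, T ≤ n → 0 ≤ G n := by
    intro n hn
    apply mul_nonneg (by norm_num)
    apply Real.log_nonneg
    rw [le_div_iff₀ (hdenpos n hn)]
    nlinarith
  -- term nonnegativity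
  have hnonneg : ∀ n : ℕ, 0 ≤ f (e n) := by
    intro n
    show (0:ℝ) ≤ Real.pi ^ 2 / (η ^ 2 * ((T+1+n : ℕ):ℝ) ^ 3 - Real.pi ^ 2 * ((T+1+n : ℕ):ℝ))
    apply div_nonneg (by positivity)
    have h1 : Real.pi < η * ((T+1+n : ℕ):ℝ) := hmono _ (by omega)
    have h2 : (1:ℝ) ≤ ((T+1+n : ℕ):ℝ) := by exact_mod_cast Nat.one_le_iff_ne_zero.mpr (by omega)
    have h3 : (0:ℝ) < η^2*((T+1+n : ℕ):ℝ)^2 - Real.pi^2 := by nlinarith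
    have hm : (0:ℝ) < ((T+1+n : ℕ):ℝ) := by linarith
    nlinarith [mul_pos hm h3]
  -- key termwise bound
  have hkey : ∀ n : ℕ, f (e n) ≤ G (T + n) - G (T + n + 1) := by
    intro n
    show Real.pi ^ 2 / (η ^ 2 * ((T+1+n : ℕ):ℝ) ^ 3 - Real.pi ^ 2 * ((T+1+n : ℕ):ℝ))
        ≤ G (T + n) - G (T + n + 1)
    have hc1 : ((T+n : ℕ):ℝ) = ((T+1+n : ℕ):ℝ) - 1 := by push_cast; ring
    have hc2 : ((T+n+1 : ℕ):ℝ) = ((T+1+n : ℕ):ℝ) := by push_cast; ring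
    have hlt : Real.pi < η * (((T+1+n : ℕ):ℝ) - 1) := by
      rw [← hc1]; exact hmono _ (by omega)
    have := stmt4_key Real.pi η ((T+1+n : ℕ):ℝ) hπ hη hlt
    simp only [hG, hc1, hc2]
    convert this using 3 <;> ring
  -- partial sum bound
  have hsum : ∀ n : ℕ, ∑ i ∈ Finset.range n, f (e i) ≤ G T := by
    intro n
    calc ∑ i ∈ Finset.range n, f (e i)
        ≤ ∑ i ∈ Finset.range n, (G (T + i) - G (T + (i + 1))) :=
          Finset.sum_le_sum fun i _ => hkey i
      _ = G (T + 0) - G (T + n) := by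
          rw [← Finset.sum_range_sub' (fun i => G (T + i)) n]
      _ ≤ G T := by
          have := hGnonneg (T + n) (by omega)
          simp only [Nat.add_zero]
          linarith
  have hsummable : Summable (f ∘ e) := summable_of_sum_range_le hnonneg hsum
  have hS : Summable f := (Equiv.summable_iff e).mp hsummable
  refine ⟨hS, ?_⟩
  have htsum : ∑' n, f (e n) ≤ G T := Real.tsum_le_of_sum_range_le hnonneg hsum
  have heq : ∑' n, f (e n) = ∑' t, f t := Equiv.tsum_eq e f
  rw [← heq]
  exact htsum
end

section
/- For every real η > 0 and every natural number T ≥ 0, the two-sided tail sum ∑_{t ∈ ℤ, |t| > T} η · e^{−√(|t| η / 2)} converges and is bounded above by 8 · (1 + √(T η / 2)) · e^{−√(T η / 2)}. -/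
open Real

private lemma key_step (η : ℝ) (hη : 0 < η) (n : ℕ) :
    η * Real.exp (-Real.sqrt ((n + 1 : ℕ) * η / 2)) ≤
      4 * (1 + Real.sqrt ((n : ℕ) * η / 2)) * Real.exp (-Real.sqrt ((n : ℕ) * η / 2)) -
        4 * (1 + Real.sqrt ((n + 1 : ℕ) * η / 2)) * Real.exp (-Real.sqrt ((n + 1 : ℕ) * η / 2)) := by
  set a := Real.sqrt ((n : ℕ) * η / 2) with ha'
  set b := Real.sqrt ((n + 1 : ℕ) * η / 2) with hb'
  have ha : 0 ≤ a := Real.sqrt_nonneg _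
  have hb : 0 ≤ b := Real.sqrt_nonneg _
  have ha2 : a ^ 2 = (n : ℝ) * η / 2 := by
    rw [ha', sq_sqrt (by positivity)]
  have hb2 : b ^ 2 = ((n : ℝ) + 1) * η / 2 := by
    rw [hb', Nat.cast_add, Nat.cast_one, sq_sqrt (by positivity)]
  have hab : a ≤ b := by
    apply Real.sqrt_le_sqrt
    push_cast
    nlinarith [hη.le, Nat.cast_nonneg (α := ℝ) n]
  have hd : 0 ≤ b - a := by linarith
  have hexp : 1 + (b - a) + (b - a) ^ 2 / 2 ≤ Real.exp (b - a) :=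
    Real.quadratic_le_exp_of_nonneg hd
  have heb : 0 < Real.exp (-b) := Real.exp_pos _
  have hsplit : Real.exp (-a) = Real.exp (b - a) * Real.exp (-b) := by
    rw [← Real.exp_add]; ring_nf
  have hη2 : η = 2 * (b ^ 2 - a ^ 2) := by rw [hb2, ha2]; ring
  have key2 : 2 * (b ^ 2 - a ^ 2) + 4 * (1 + b) ≤ 4 * (1 + a) * Real.exp (b - a) := by
    have h4 : 4 * (1 + a) * (1 + (b - a) + (b - a) ^ 2 / 2) ≤
        4 * (1 + a) * Real.exp (b - a) :=
      mul_le_mul_of_nonneg_left hexp (by linarith)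
    nlinarith [mul_nonneg ha (sq_nonneg (b - a))]
  rw [hsplit, hη2]
  nlinarith [mul_le_mul_of_nonneg_right key2 heb.le]

theorem stmt_10 (η : ℝ) (T : ℕ) (hη : 0 < η) :
    Summable (fun t : {t : ℤ // (T : ℤ) < |t|} =>
      η * Real.exp (-Real.sqrt (|(t : ℤ)| * η / 2))) ∧
    ∑' t : {t : ℤ // (T : ℤ) < |t|}, η * Real.exp (-Real.sqrt (|(t : ℤ)| * η / 2)) ≤
      8 * (1 + Real.sqrt (T * η / 2)) * Real.exp (-Real.sqrt (T * η / 2)) := by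
  classical
  set g : ℕ → ℝ := fun n => η * Real.exp (-Real.sqrt ((n : ℝ) * η / 2)) with hg
  set F : ℕ → ℝ := fun n => 4 * (1 + Real.sqrt ((n : ℝ) * η / 2)) *
    Real.exp (-Real.sqrt ((n : ℝ) * η / 2)) with hF
  have hg0 : ∀ n, 0 ≤ g n := fun n => by positivity
  have hF0 : ∀ n, 0 ≤ F n := fun n => by positivity
  have key : ∀ n : ℕ, g (n + 1) ≤ F n - F (n + 1) := by
    intro n
    have := key_step η hη n
    push_cast at this ⊢
    convert this using 4 <;> push_cast <;> ring
  -- partial sums of shifted sequences are bounded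
  have hps : ∀ k N : ℕ, ∑ i ∈ Finset.range N, g (k + 1 + i) ≤ F k := by
    intro k N
    have h1 : ∑ i ∈ Finset.range N, g (k + 1 + i) ≤
        ∑ i ∈ Finset.range N, (F (k + i) - F (k + i + 1)) := by
      apply Finset.sum_le_sum
      intro i _
      have := key (k + i)
      have he : k + 1 + i = (k + i) + 1 := by ring
      rw [he]
      exact this
    have h2 : ∑ i ∈ Finset.range N, (F (k + i) - F (k + i + 1)) = F (k + 0) - F (k + N) := by
      have := Finset.sum_range_sub' (fun i => F (k + i)) N
      simpa [add_assoc] using this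
    rw [h2] at h1
    simp only [Nat.add_zero] at h1
    have := hF0 (k + N)
    linarith
  -- summability over ℕ
  have hgsum1 : Summable (fun n : ℕ => g (n + 1)) := by
    apply summable_of_sum_range_le (c := F 0) (fun n => hg0 _)
    intro n
    have := hps 0 n
    simpa [add_comm] using this
  have hgsum : Summable g := (summable_nat_add_iff 1).mp hgsum1
  -- summability over ℤ
  set fZ : ℤ → ℝ := fun t => η * Real.exp (-Real.sqrt ((|t| : ℝ) * η / 2)) with hfZ
  have hfZnat : ∀ n : ℕ, fZ n = g n := by
    intro n
    simp [hfZ, hg]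
  have hfZsymm : ∀ t : ℤ, fZ (-t) = fZ t := by
    intro t
    simp only [hfZ]
    push_cast
    rw [abs_neg]
  have hfZneg : ∀ n : ℕ, fZ (-(n + 1)) = g (n + 1) := by
    intro n
    rw [show (-(n + 1) : ℤ) = -((n + 1 : ℕ) : ℤ) by push_cast; ring, hfZsymm, hfZnat]
  have hZsum : Summable fZ := by
    apply Summable.of_nat_of_neg_add_one
    · exact hgsum.congr fun n => (hfZnat n).symm
    · exact hgsum1.congr fun n => (hfZneg n).symm
  set s : Set ℤ := {t : ℤ | (T : ℤ) < |t|} with hs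
  have hsub : Summable (fun t : {t : ℤ // (T : ℤ) < |t|} =>
      η * Real.exp (-Real.sqrt (|(t : ℤ)| * η / 2))) := by
    have := hZsum.subtype s
    exact this.congr fun t => by simp [hfZ]
  refine ⟨hsub, ?_⟩
  -- indicator function
  set G : ℤ → ℝ := s.indicator fZ with hG
  have hGsum : Summable G := hZsum.indicator s
  have hG0 : ∀ t, 0 ≤ G t := by
    intro t
    apply Set.indicator_nonneg
    intro x _
    positivity
  have hGnat0 : ∀ n : ℕ, n ≤ T → G n = 0 := by
    intro n hn
    apply Set.indicator_of_notMem
    simp only [hs, Set.mem_setOf_eq, not_lt]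
    rw [abs_of_nonneg (by positivity)]
    exact_mod_cast hn
  have hGnat : ∀ n : ℕ, G n ≤ if n ≤ T then 0 else g n := by
    intro n
    by_cases hn : n ≤ T
    · rw [hGnat0 n hn]; simp [hn]
    · simp only [hn, if_false]
      rw [hG, ← hfZnat n]
      by_cases hm : ((n : ℤ)) ∈ s
      · rw [Set.indicator_of_mem hm]
      · rw [Set.indicator_of_notMem hm]
        simp only [hfZ]
        positivity
  -- partial sums of G over ℕ are bounded by F T
  have hpsG : ∀ N : ℕ, ∑ i ∈ Finset.range N, G i ≤ F T := by
    intro N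
    rcases le_or_gt N (T + 1) with hN | hN
    · have : ∑ i ∈ Finset.range N, G i = 0 := by
        apply Finset.sum_eq_zero
        intro i hi
        simp only [Finset.mem_range] at hi
        exact hGnat0 i (by omega)
      rw [this]; exact hF0 T
    · have hzero : ∑ i ∈ Finset.range N, G i = ∑ i ∈ Finset.Ico (T + 1) N, G i := by
        rw [Finset.range_eq_Ico, ← Finset.sum_Ico_consecutive _ (Nat.zero_le (T + 1)) hN.le]
        have : ∑ i ∈ Finset.Ico 0 (T + 1), G i = 0 := by
          apply Finset.sum_eq_zero
          intro i hi
          simp only [Finset.mem_Ico] at hi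
          exact hGnat0 i (by omega)
        rw [this, zero_add]
      rw [hzero, Finset.sum_Ico_eq_sum_range]
      calc ∑ i ∈ Finset.range (N - (T + 1)), G (T + 1 + i)
          ≤ ∑ i ∈ Finset.range (N - (T + 1)), g (T + 1 + i) := by
            apply Finset.sum_le_sum
            intro i _
            have := hGnat (T + 1 + i)
            simpa [Nat.not_le.mpr (by omega : T < T + 1 + i)] using this
        _ ≤ F T := hps T _
  -- positive part
  have hGnatsum : Summable (fun n : ℕ => G n) :=
    hGsum.comp_injective Nat.cast_injective
  have hGnegsum : Summable (fun n : ℕ => G (-(n + 1))) := by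
    have := hGsum.comp_injective (@Int.negSucc.inj)
    exact this.congr fun n => by simp [Function.comp, Int.negSucc_eq]
  have hpos : ∑' n : ℕ, G n ≤ F T := Real.tsum_le_of_sum_range_le (fun n => hG0 _) hpsG
  -- negative part: G(-(n+1)) = G(n+1)
  have hGsymm : ∀ n : ℕ, G (-(n + 1)) = G ((n : ℤ) + 1) := by
    intro n
    rw [hG]
    by_cases hmem : ((n : ℤ) + 1) ∈ s
    · have hmem' : (-(n + 1) : ℤ) ∈ s := by
        simp only [hs, Set.mem_setOf_eq] at hmem ⊢
        rwa [abs_neg]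
      rw [Set.indicator_of_mem hmem, Set.indicator_of_mem hmem']
      exact hfZsymm _
    · have hmem' : (-(n + 1) : ℤ) ∉ s := by
        simp only [hs, Set.mem_setOf_eq] at hmem ⊢
        rwa [abs_neg]
      rw [Set.indicator_of_notMem hmem, Set.indicator_of_notMem hmem']
  have hneg : ∑' n : ℕ, G (-(n + 1)) ≤ F T := by
    apply Real.tsum_le_of_sum_range_le (fun n => hG0 _)
    intro N
    calc ∑ i ∈ Finset.range N, G (-(i + 1))
        = ∑ i ∈ Finset.range N, G ((i : ℤ) + 1) := by
          exact Finset.sum_congr rfl fun i _ => hGsymm i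
      _ = ∑ i ∈ Finset.range N, G ((i + 1 : ℕ)) := by
          exact Finset.sum_congr rfl fun i _ => by push_cast; ring_nf
      _ = ∑ i ∈ Finset.Ico 1 (N + 1), G (i : ℕ) := by
          rw [Finset.sum_Ico_eq_sum_range]
          simp [add_comm]
      _ ≤ ∑ i ∈ Finset.range (N + 1), G (i : ℕ) := by
          apply Finset.sum_le_sum_of_subset_of_nonneg
          · rw [Finset.range_eq_Ico]
            exact Finset.Ico_subset_Ico (Nat.zero_le 1) le_rfl
          · intro i _ _
            exact hG0 _
      _ ≤ F T := hpsG (N + 1)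
  -- assemble
  have htsum_eq : ∑' t : {t : ℤ // (T : ℤ) < |t|},
      η * Real.exp (-Real.sqrt (|(t : ℤ)| * η / 2)) = ∑' t : ℤ, G t := by
    rw [hG, ← tsum_subtype s fZ]
    exact tsum_congr fun t => by simp [hfZ]
  have hsplitZ : ∑' t : ℤ, G t = (∑' n : ℕ, G n) + ∑' n : ℕ, G (-(n + 1)) :=
    tsum_of_nat_of_neg_add_one hGnatsum hGnegsum
  rw [htsum_eq, hsplitZ]
  have : F T + F T = 8 * (1 + Real.sqrt (T * η / 2)) * Real.exp (-Real.sqrt (T * η / 2)) := by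
    rw [hF]; ring
  linarith [hpos, hneg]
end

section
/- Let η > 0, let T be a natural number, and let (F_t)_{t ∈ ℤ} and (g_t)_{t ∈ ℤ} be complex sequences such that |F_t| ≤ η · e^{−√(|t| η / 2)} for all integers t with |t| > T, and |g_t| ≤ 1 for all t. Then for every real w, the tail series ∑_{|t| > T} e^{i t w} F_t g_{−t} converges absolutely and its absolute value is at most 8 · (1 + √(T η / 2)) · e^{−√(T η / 2)}. -/
open Real

lemma key_ineq {u v : ℝ} (hu : 0 ≤ u) (huv : u ≤ v) :
    (v ^ 2 - u ^ 2) / 2 * Real.exp (-v) ≤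
      (1 + u) * Real.exp (-u) - (1 + v) * Real.exp (-v) := by
  have hd : 0 ≤ v - u := by linarith
  have hquad : 1 + (v - u) + (v - u) ^ 2 / 2 ≤ Real.exp (v - u) :=
    Real.quadratic_le_exp_of_nonneg hd
  have hmain : (v ^ 2 - u ^ 2) / 2 + (1 + v) ≤ (1 + u) * Real.exp (v - u) := by
    have h1 : (1 + u) * (1 + (v - u) + (v - u) ^ 2 / 2) ≤ (1 + u) * Real.exp (v - u) := by
      apply mul_le_mul_of_nonneg_left hquad (by linarith)
    nlinarith [sq_nonneg (v - u), mul_nonneg hu (sq_nonneg (v - u))]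
  have := mul_le_mul_of_nonneg_right hmain (le_of_lt (Real.exp_pos (-v)))
  have hvv : Real.exp (v - u) * Real.exp (-v) = Real.exp (-u) := by
    rw [← Real.exp_add]; ring_nf
  nlinarith [Real.exp_pos (-v), Real.exp_pos (-u)]

section aux
variable (η : ℝ) (T : ℕ)

noncomputable def psiF (n : ℕ) : ℝ := Real.sqrt (n * η / 2)
noncomputable def fF (n : ℕ) : ℝ := (1 + psiF η n) * Real.exp (-psiF η n)
noncomputable def gF (n : ℕ) : ℝ :=
  if (T : ℤ) < (n : ℤ) then η * Real.exp (-psiF η n) else 0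

variable {η}

lemma fF_nonneg (hη : 0 < η) (n : ℕ) : 0 ≤ fF η n := by
  have := Real.sqrt_nonneg ((n : ℝ) * η / 2)
  exact mul_nonneg (by simpa [psiF] using by positivity) (Real.exp_pos _).le

lemma fF_antitone (hη : 0 < η) {m n : ℕ} (hmn : m ≤ n) : fF η n ≤ fF η m := by
  have hpsi : psiF η m ≤ psiF η n := by
    apply Real.sqrt_le_sqrt
    have : (m : ℝ) ≤ n := Nat.cast_le.mpr hmn
    nlinarith
  have hm : 0 ≤ psiF η m := Real.sqrt_nonneg _
  have := key_ineq hm hpsi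
  unfold fF
  nlinarith [mul_nonneg (sub_nonneg.mpr (by nlinarith [Real.sq_sqrt (show (0:ℝ) ≤ m * η / 2 by positivity), Real.sq_sqrt (show (0:ℝ) ≤ n * η / 2 by positivity)] : psiF η m ^ 2 ≤ psiF η n ^ 2)) (Real.exp_pos (-psiF η n)).le]

lemma step_ineq (hη : 0 < η) (n : ℕ) :
    η * Real.exp (-psiF η (n + 1)) ≤ 4 * (fF η n - fF η (n + 1)) := by
  have hu : 0 ≤ psiF η n := Real.sqrt_nonneg _
  have huv : psiF η n ≤ psiF η (n + 1) := by
    apply Real.sqrt_le_sqrt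
    have : (n : ℝ) ≤ (n : ℝ) + 1 := by linarith
    push_cast
    nlinarith
  have hsq : psiF η (n + 1) ^ 2 - psiF η n ^ 2 = η / 2 := by
    rw [psiF, psiF, Real.sq_sqrt (by positivity), Real.sq_sqrt (by positivity)]
    push_cast; ring
  have := key_ineq hu huv
  rw [hsq] at this
  unfold fF
  nlinarith [Real.exp_pos (-psiF η (n + 1))]

lemma partial_sum_bound (hη : 0 < η) (N : ℕ) :
    ∑ i ∈ Finset.range N, gF η T i ≤ 4 * fF η T := by
  have main : ∀ N : ℕ, ∑ i ∈ Finset.range (N + 1), gF η T i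
      ≤ 4 * (fF η T - fF η (max T N)) := by
    intro N
    induction N with
    | zero =>
      simp only [Finset.sum_range_one, gF, if_neg (show ¬ ((T:ℤ) < ((0:ℕ):ℤ)) by omega),
        Nat.max_zero]
      simp
    | succ n ih =>
      rw [Finset.sum_range_succ]
      rcases le_or_gt (n + 1) T with h | h
      · have hg0 : gF η T (n + 1) = 0 := by
          rw [gF, if_neg (by exact_mod_cast not_lt.mpr (by exact_mod_cast h))]
        have hmax1 : max T n = T := Nat.max_eq_left (by omega)
        have hmax2 : max T (n + 1) = T := Nat.max_eq_left h
        rw [hg0, hmax2]; rw [hmax1] at ih; linarith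
      · have hg : gF η T (n + 1) = η * Real.exp (-psiF η (n + 1)) := by
          rw [gF, if_pos (by exact_mod_cast h)]
        have hmax1 : max T n = n := Nat.max_eq_right (by omega)
        have hmax2 : max T (n + 1) = n + 1 := Nat.max_eq_right (by omega)
        rw [hg, hmax2]; rw [hmax1] at ih
        have := step_ineq hη n
        linarith
  rcases N with _ | M
  · simpa using mul_nonneg (by norm_num : (0:ℝ) ≤ 4) (fF_nonneg hη T)
  · have h1 := main M
    have h2 := fF_nonneg hη (max T M)
    linarith
end aux

section aux2
variable {η : ℝ} {T : ℕ}

lemma gF_nonneg (hη : 0 < η) (n : ℕ) : 0 ≤ gF η T n := by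
  unfold gF; split
  · exact mul_nonneg hη.le (Real.exp_pos _).le
  · exact le_refl 0

lemma gF_summable (hη : 0 < η) : Summable (gF η T) :=
  summable_of_sum_range_le (gF_nonneg hη) (partial_sum_bound T hη)

lemma gF_tsum_le (hη : 0 < η) : ∑' n, gF η T n ≤ 4 * fF η T :=
  Summable.tsum_le_of_sum_range_le (gF_summable hη) (partial_sum_bound T hη)

noncomputable def hF' (η : ℝ) (T : ℕ) : ℤ → ℝ := fun t =>
  if (T : ℤ) < |t| then η * Real.exp (-Real.sqrt (|t| * η / 2)) else 0

lemma hF'_nat (n : ℕ) : hF' η T n = gF η T n := by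
  simp only [hF', gF, psiF, Int.abs_natCast]
  norm_num

lemma hF'_neg_nat (n : ℕ) : hF' η T (-(n : ℤ)) = gF η T n := by
  simp only [hF', gF, psiF, abs_neg, Int.abs_natCast]
  norm_num

lemma hF'_summable (hη : 0 < η) : Summable (hF' η T) := by
  apply Summable.of_nat_of_neg
  · exact (gF_summable hη).congr fun n => (hF'_nat n).symm
  · exact (gF_summable hη).congr fun n => (hF'_neg_nat n).symm

lemma hF'_nonneg (hη : 0 < η) (t : ℤ) : 0 ≤ hF' η T t := by
  unfold hF'; split
  · exact mul_nonneg hη.le (Real.exp_pos _).le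
  · exact le_refl 0

lemma hF'_tsum_le (hη : 0 < η) : ∑' t, hF' η T t ≤ 8 * fF η T := by
  rw [Summable.tsum_of_nat_of_neg ((gF_summable hη).congr fun n => (hF'_nat n).symm)
      ((gF_summable hη).congr fun n => (hF'_neg_nat n).symm)]
  have h0 : hF' η T 0 = 0 := by
    rw [hF', if_neg (by simp)]
  have e1 : ∑' n : ℕ, hF' η T n = ∑' n, gF η T n := tsum_congr hF'_nat
  have e2 : ∑' n : ℕ, hF' η T (-n) = ∑' n, gF η T n := tsum_congr hF'_neg_nat
  rw [h0, e1, e2]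
  have := gF_tsum_le (T := T) hη
  linarith
end aux2

theorem stmt_11 (η : ℝ) (hη : 0 < η) (T : ℕ) (F g : ℤ → ℂ)
    (hF : ∀ t : ℤ, (T : ℤ) < |t| → ‖F t‖ ≤ η * Real.exp (-Real.sqrt (|t| * η / 2)))
    (hg : ∀ t : ℤ, ‖g t‖ ≤ 1) (w : ℝ) :
    Summable (fun t : {t : ℤ // (T : ℤ) < |t|} =>
      ‖Complex.exp (Complex.I * (t : ℤ) * w) * F t * g (-(t : ℤ))‖) ∧
    ‖∑' t : {t : ℤ // (T : ℤ) < |t|},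
        Complex.exp (Complex.I * (t : ℤ) * w) * F t * g (-(t : ℤ))‖ ≤
      8 * (1 + Real.sqrt (T * η / 2)) * Real.exp (-Real.sqrt (T * η / 2)) := by
  have hterm : ∀ t : ℤ, (T : ℤ) < |t| →
      ‖Complex.exp (Complex.I * t * w) * F t * g (-t)‖ ≤ hF' η T t := by
    intro t ht
    rw [hF', if_pos ht]
    have h1 : ‖Complex.exp (Complex.I * t * w)‖ = 1 := by
      rw [Complex.norm_exp]
      simp
    calc ‖Complex.exp (Complex.I * t * w) * F t * g (-t)‖
        = ‖Complex.exp (Complex.I * t * w)‖ * ‖F t‖ * ‖g (-t)‖ := by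
          rw [norm_mul, norm_mul]
      _ ≤ 1 * (η * Real.exp (-Real.sqrt (|t| * η / 2))) * 1 := by
          apply mul_le_mul (mul_le_mul h1.le (hF t ht) (norm_nonneg _) (by norm_num))
            (hg _) (norm_nonneg _) (by positivity)
      _ = η * Real.exp (-Real.sqrt (|t| * η / 2)) := by ring
  have hsubsum : Summable (fun t : {t : ℤ // (T : ℤ) < |t|} => hF' η T (t : ℤ)) :=
    (hF'_summable hη).subtype {t : ℤ | (T : ℤ) < |t|}
  have hsum : Summable (fun t : {t : ℤ // (T : ℤ) < |t|} =>
      ‖Complex.exp (Complex.I * (t : ℤ) * w) * F t * g (-(t : ℤ))‖) := by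
    apply Summable.of_nonneg_of_le (fun t => norm_nonneg _)
      (fun t : {t : ℤ // (T : ℤ) < |t|} => hterm (t : ℤ) t.2) hsubsum
  refine ⟨hsum, ?_⟩
  calc ‖∑' t : {t : ℤ // (T : ℤ) < |t|},
        Complex.exp (Complex.I * (t : ℤ) * w) * F t * g (-(t : ℤ))‖
      ≤ ∑' t : {t : ℤ // (T : ℤ) < |t|},
        ‖Complex.exp (Complex.I * (t : ℤ) * w) * F t * g (-(t : ℤ))‖ :=
        norm_tsum_le_tsum_norm hsum
    _ ≤ ∑' t : {t : ℤ // (T : ℤ) < |t|}, hF' η T (t : ℤ) :=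
        Summable.tsum_le_tsum (fun t : {t : ℤ // (T : ℤ) < |t|} => hterm (t : ℤ) t.2) hsum hsubsum
    _ ≤ ∑' t : ℤ, hF' η T t :=
        Summable.tsum_subtype_le (hF' η T) {t : ℤ | (T : ℤ) < |t|} (hF'_nonneg hη) (hF'_summable hη)
    _ ≤ 8 * fF η T := hF'_tsum_le hη
    _ = 8 * (1 + Real.sqrt (T * η / 2)) * Real.exp (-Real.sqrt (T * η / 2)) := by
        simp only [fF, psiF]; ring
end
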